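/- For every k > 0 and λ > k, the function L ↦ (1/k)·(artanh(k/λ) − artanh((k/λ)·cos(L·√(λ² − k²)/4))) is strictly monotone increasing on the interval [0, 2π/√(λ² − k²)]. -/

import Mathlib

/-- The inverse hyperbolic tangent, `artanh x = (1/2)·log ((1 + x)/(1 − x))`. -/
noncomputable def Real.artanh' (x : ℝ) : ℝ := Real.log ((1 + x) / (1 - x)) / 2

lemma artanh_strict (x y : ℝ) (hx : -1 < x) (hxy : x < y) (hy : y < 1) :
    Real.artanh' x < Real.artanh' y := by
  unfold Real.artanh'
  have h1x : 0 < 1 - x := by linarith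
  have h1y : 0 < 1 - y := by linarith
  have h2x : 0 < 1 + x := by linarith
  have h2y : 0 < 1 + y := by linarith
  have : (1 + x) / (1 - x) < (1 + y) / (1 - y) := by
    rw [div_lt_div_iff₀ h1x h1y]
    nlinarith
  have hp : 0 < (1 + x) / (1 - x) := div_pos h2x h1x
  have := Real.log_lt_log hp this
  linarith

/-- **Monotonicity of the hyperbolic lune inradius function (case `λ > k`).**
For `0 < k < λ`, the function
`L ↦ (1/k)·(artanh (k/λ) − artanh ((k/λ)·cos (L·√(λ² − k²)/4)))`
is strictly increasing on `[0, 2π/√(λ² − k²)]`. -/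
theorem strictMonoOn_lune_inradius_hyperbolic_of_lt
    (k lam : ℝ) (hk : 0 < k) (hlam : k < lam) :
    StrictMonoOn (fun L : ℝ => (1 / k) *
        (Real.artanh' (k / lam) -
          Real.artanh' ((k / lam) * Real.cos (L * Real.sqrt (lam ^ 2 - k ^ 2) / 4))))
      (Set.Icc 0 (2 * Real.pi / Real.sqrt (lam ^ 2 - k ^ 2))) := by
  set s := Real.sqrt (lam ^ 2 - k ^ 2) with hs
  have hlam0 : 0 < lam := lt_trans hk hlam
  have hs0 : 0 < s := Real.sqrt_pos.mpr (by nlinarith)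
  have hc0 : 0 < k / lam := div_pos hk hlam0
  have hc1 : k / lam < 1 := (div_lt_one hlam0).mpr hlam
  intro a ha b hb hab
  obtain ⟨ha0, ha1⟩ := ha
  obtain ⟨hb0, hb1⟩ := hb
  -- angles
  have hmem : ∀ x : ℝ, 0 ≤ x → x ≤ 2 * Real.pi / s → x * s / 4 ∈ Set.Icc 0 Real.pi := by
    intro x hx0 hx1
    constructor
    · positivity
    · have : x * s ≤ 2 * Real.pi := by
        rw [le_div_iff₀ hs0] at hx1; linarith
      nlinarith [Real.pi_pos]
  have hcoslt : Real.cos (b * s / 4) < Real.cos (a * s / 4) := by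
    apply Real.strictAntiOn_cos (hmem a ha0 ha1) (hmem b hb0 hb1)
    have := mul_lt_mul_of_pos_right hab hs0
    linarith
  have hbound : ∀ x : ℝ, x ∈ Set.Icc (0:ℝ) Real.pi → -1 < (k/lam) * Real.cos x ∧ (k/lam) * Real.cos x < 1 := by
    intro x _
    have h1 := Real.neg_one_le_cos x
    have h2 := Real.cos_le_one x
    constructor <;> nlinarith
  obtain ⟨hbl, hbr⟩ := hbound _ (hmem b hb0 hb1)
  obtain ⟨hal, har⟩ := hbound _ (hmem a ha0 ha1)
  have := artanh_strict _ _ hbl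
    (by have := hc0; nlinarith : (k/lam) * Real.cos (b * s / 4) < (k/lam) * Real.cos (a * s / 4)) har
  simp only
  have hik : 0 < 1 / k := by positivity
  apply mul_lt_mul_of_pos_left _ hik
  linarith
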